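/- For every constant K ≥ 1 there exists a constant C = C(K) > 0 with the following property. Let W_1(0), …, W_L(0) be weight matrices of a depth-L width-m linear network satisfying ‖W_{b:a}(0)‖ ≤ K·√L·m^{(b−a+1)/2} for all 1 < a ≤ b < L and σ_max(W_{L:a}(0)) ≤ 1.2·m^{(L−a+1)/2} for all 1 < a ≤ L. Let R > 0, let Δ_1, …, Δ_L be matrices of matching shapes with ‖Δ_i‖_F ≤ R for every i, and set W_i = W_i(0) + Δ_i. If m ≥ C·L³·R², then for all 1 < i ≤ L, ‖W_{L:i} − W_{L:i}(0)‖ ≤ 0.05·m^{(L−i+1)/2}. -/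

import Mathlib

open MeasureTheory ProbabilityTheory Matrix
open scoped BigOperators ENNReal

noncomputable section

/-- `W_j * W_{j-1} * ⋯ * W_i` for a family of square matrices (identity if `j < i`). -/
def midProd {m : ℕ} (W : ℕ → Matrix (Fin m) (Fin m) ℝ) (i j : ℕ) :
    Matrix (Fin m) (Fin m) ℝ :=
  (((List.range' i (j + 1 - i)).reverse).map W).prod

/-- Euclidean norm of a vector. -/
def enorm' {a : ℕ} (v : Fin a → ℝ) : ℝ := Real.sqrt (∑ i, v i ^ 2)

/-- Largest singular value (spectral norm): supremum of `‖A v‖` over unit vectors `v`. -/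
def smax {a b : ℕ} (A : Matrix (Fin a) (Fin b) ℝ) : ℝ :=
  ⨆ v : {v : Fin b → ℝ // ∑ j, v j ^ 2 = 1}, enorm' (A.mulVec v.1)

/-- Smallest singular value: infimum of `‖A v‖` over unit vectors `v`. -/
def smin {a b : ℕ} (A : Matrix (Fin a) (Fin b) ℝ) : ℝ :=
  ⨅ v : {v : Fin b → ℝ // ∑ j, v j ^ 2 = 1}, enorm' (A.mulVec v.1)

/-- Squared Frobenius norm of a matrix. -/
def frobSq {a b : ℕ} (A : Matrix (Fin a) (Fin b) ℝ) : ℝ := ∑ i, ∑ j, A i j ^ 2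

/-- Frobenius norm of a matrix. -/
def frob {a b : ℕ} (A : Matrix (Fin a) (Fin b) ℝ) : ℝ := Real.sqrt (frobSq A)

/-- Index type for all the entries of the weight matrices
`W_1 ∈ ℝ^{m×din}`, `W_2, …, W_{L-1} ∈ ℝ^{m×m}`, `W_L ∈ ℝ^{dout×m}`. -/
def InitIdx (L m din dout : ℕ) : Type :=
  (Fin m × Fin din) ⊕ (({k : ℕ // 2 ≤ k ∧ k ≤ L - 1}) × (Fin m × Fin m)) ⊕ (Fin dout × Fin m)

/-- The family of all entries of the weight matrices. -/
def initEntry {Ω : Type*} (L m din dout : ℕ)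
    (W1 : Ω → Matrix (Fin m) (Fin din) ℝ)
    (Wmid : ℕ → Ω → Matrix (Fin m) (Fin m) ℝ)
    (WL : Ω → Matrix (Fin dout) (Fin m) ℝ) :
    InitIdx L m din dout → Ω → ℝ :=
  fun idx ω =>
    match idx with
    | Sum.inl p => W1 ω p.1 p.2
    | Sum.inr (Sum.inl p) => Wmid p.1.1 ω p.2.1 p.2.2
    | Sum.inr (Sum.inr p) => WL ω p.1 p.2

/-! ### Auxiliary lemmas -/

/-- A matrix as a continuous linear map between Euclidean spaces. -/
def clm {a b : ℕ} (A : Matrix (Fin a) (Fin b) ℝ) :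
    EuclideanSpace ℝ (Fin b) →L[ℝ] EuclideanSpace ℝ (Fin a) :=
  LinearMap.toContinuousLinearMap (Matrix.toEuclideanLin A)

lemma clm_apply {a b : ℕ} (A : Matrix (Fin a) (Fin b) ℝ) (v : EuclideanSpace ℝ (Fin b)) :
    clm A v = (WithLp.equiv 2 (Fin a → ℝ)).symm (A.mulVec ((WithLp.equiv 2 (Fin b → ℝ)) v)) := rfl

lemma enorm'_eq {a : ℕ} (v : Fin a → ℝ) :
    enorm' v = ‖(WithLp.equiv 2 (Fin a → ℝ)).symm v‖ := by
  simp [enorm', EuclideanSpace.norm_eq, Real.norm_eq_abs, sq_abs]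

lemma norm_eu {a : ℕ} (v : EuclideanSpace ℝ (Fin a)) :
    ‖v‖ = Real.sqrt (∑ i, v i ^ 2) := by
  simp [EuclideanSpace.norm_eq, Real.norm_eq_abs, sq_abs]

lemma smax_eq {a b : ℕ} (hb : 0 < b) (A : Matrix (Fin a) (Fin b) ℝ) :
    smax A = ‖clm A‖ := by
  have hne : Nonempty {v : Fin b → ℝ // ∑ j, v j ^ 2 = 1} := by
    refine ⟨⟨fun j => if j = ⟨0, hb⟩ then 1 else 0, ?_⟩⟩
    simp
  have hterm : ∀ v : {v : Fin b → ℝ // ∑ j, v j ^ 2 = 1},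
      enorm' (A.mulVec v.1) = ‖clm A ((WithLp.equiv 2 (Fin b → ℝ)).symm v.1)‖ := by
    intro v; rw [enorm'_eq, clm_apply]; simp
  have hnorm1 : ∀ v : {v : Fin b → ℝ // ∑ j, v j ^ 2 = 1},
      ‖((WithLp.equiv 2 (Fin b → ℝ)).symm v.1)‖ = 1 := by
    intro v
    rw [norm_eu]
    simp [v.2]
  have hub : ∀ v : {v : Fin b → ℝ // ∑ j, v j ^ 2 = 1},
      enorm' (A.mulVec v.1) ≤ ‖clm A‖ := by
    intro v
    rw [hterm v]
    calc ‖clm A ((WithLp.equiv 2 (Fin b → ℝ)).symm v.1)‖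
        ≤ ‖clm A‖ * ‖((WithLp.equiv 2 (Fin b → ℝ)).symm v.1)‖ := (clm A).le_opNorm _
      _ = ‖clm A‖ := by rw [hnorm1 v, mul_one]
  have hbdd : BddAbove (Set.range fun v : {v : Fin b → ℝ // ∑ j, v j ^ 2 = 1} =>
      enorm' (A.mulVec v.1)) := ⟨‖clm A‖, by rintro x ⟨w, rfl⟩; exact hub w⟩
  apply le_antisymm
  · exact ciSup_le hub
  · apply ContinuousLinearMap.opNorm_le_bound
    · obtain ⟨v⟩ := hne
      refine le_ciSup_of_le hbdd v ?_
      rw [enorm']; positivity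
    · intro x
      rcases eq_or_ne x 0 with rfl | hx
      · simp
      · have hxn : ‖x‖ ≠ 0 := norm_ne_zero_iff.2 hx
        set u : EuclideanSpace ℝ (Fin b) := ‖x‖⁻¹ • x with hu
        have hun : ‖u‖ = 1 := by
          rw [hu, norm_smul]; simp [abs_of_nonneg (norm_nonneg x), inv_mul_cancel₀ hxn]
        have husum : ∑ j, ((WithLp.equiv 2 (Fin b → ℝ)) u) j ^ 2 = 1 := by
          have h2 : Real.sqrt (∑ i, u i ^ 2) = 1 := (norm_eu u) ▸ hun
          have h3 := congrArg (· ^ 2) h2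
          simpa [Real.sq_sqrt (by positivity : (0:ℝ) ≤ ∑ i, u i ^ 2)] using h3
        have hle : ‖clm A u‖ ≤ smax A := by
          have h5 : enorm' (A.mulVec ((WithLp.equiv 2 (Fin b → ℝ)) u)) ≤ smax A :=
            le_ciSup_of_le hbdd ⟨_, husum⟩ le_rfl
          calc ‖clm A u‖ = enorm' (A.mulVec ((WithLp.equiv 2 (Fin b → ℝ)) u)) := by
                rw [enorm'_eq, clm_apply]
            _ ≤ smax A := h5
        calc ‖clm A x‖ = ‖clm A (‖x‖ • u)‖ := by
              rw [hu, smul_smul, mul_inv_cancel₀ hxn, one_smul]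
          _ = ‖x‖ * ‖clm A u‖ := by rw [(clm A).map_smul, norm_smul, Real.norm_eq_abs,
              abs_of_nonneg (norm_nonneg x)]
          _ ≤ ‖x‖ * smax A := by gcongr
          _ = smax A * ‖x‖ := mul_comm _ _

lemma smax_nonneg {a b : ℕ} (hb : 0 < b) (A : Matrix (Fin a) (Fin b) ℝ) : 0 ≤ smax A := by
  rw [smax_eq hb]; exact norm_nonneg _

lemma clm_mul {a b c : ℕ} (A : Matrix (Fin a) (Fin b) ℝ) (B : Matrix (Fin b) (Fin c) ℝ) :
    clm (A * B) = (clm A).comp (clm B) := by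
  ext v
  simp [clm_apply, Matrix.mulVec_mulVec]

lemma smax_mul_le {a b c : ℕ} (hb : 0 < b) (hc : 0 < c)
    (A : Matrix (Fin a) (Fin b) ℝ) (B : Matrix (Fin b) (Fin c) ℝ) :
    smax (A * B) ≤ smax A * smax B := by
  rw [smax_eq hc, smax_eq hb, smax_eq hc, clm_mul]
  exact ContinuousLinearMap.opNorm_comp_le _ _

lemma clm_add {a b : ℕ} (A B : Matrix (Fin a) (Fin b) ℝ) : clm (A + B) = clm A + clm B := by
  simp [clm, map_add]

lemma clm_zero {a b : ℕ} : clm (0 : Matrix (Fin a) (Fin b) ℝ) = 0 := by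
  simp [clm]

lemma smax_add_le {a b : ℕ} (hb : 0 < b) (A B : Matrix (Fin a) (Fin b) ℝ) :
    smax (A + B) ≤ smax A + smax B := by
  rw [smax_eq hb, smax_eq hb, smax_eq hb, clm_add]
  exact norm_add_le _ _

lemma smax_sum_le {a b : ℕ} (hb : 0 < b) (s : Finset ℕ) (f : ℕ → Matrix (Fin a) (Fin b) ℝ) :
    smax (∑ j ∈ s, f j) ≤ ∑ j ∈ s, smax (f j) := by
  classical
  induction s using Finset.induction with
  | empty => rw [Finset.sum_empty, Finset.sum_empty, smax_eq hb, clm_zero]; simp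
  | @insert a s hnotmem ih =>
    rw [Finset.sum_insert hnotmem, Finset.sum_insert hnotmem]
    exact le_trans (smax_add_le hb _ _) (by linarith)

lemma smax_one' {m : ℕ} (hm : 0 < m) : smax (1 : Matrix (Fin m) (Fin m) ℝ) ≤ 1 := by
  rw [smax_eq hm]
  have h : clm (1 : Matrix (Fin m) (Fin m) ℝ) = ContinuousLinearMap.id ℝ _ := by
    ext v; simp [clm_apply]
  rw [h]
  exact ContinuousLinearMap.norm_id_le

lemma smax_le_frob {a b : ℕ} (hb : 0 < b) (A : Matrix (Fin a) (Fin b) ℝ) :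
    smax A ≤ frob A := by
  rw [smax_eq hb]
  apply ContinuousLinearMap.opNorm_le_bound
  · rw [frob]; positivity
  · intro x
    rw [clm_apply, ← enorm'_eq, enorm', norm_eu]
    have hCS : ∀ i, (A.mulVec ((WithLp.equiv 2 (Fin b → ℝ)) x) i) ^ 2 ≤
        (∑ j, A i j ^ 2) * (∑ j, x j ^ 2) := by
      intro i
      simpa [Matrix.mulVec, dotProduct] using
        Finset.sum_mul_sq_le_sq_mul_sq Finset.univ (fun j => A i j) (fun j => x j)
    calc Real.sqrt (∑ i, (A.mulVec ((WithLp.equiv 2 (Fin b → ℝ)) x)) i ^ 2)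
        ≤ Real.sqrt (∑ i, (∑ j, A i j ^ 2) * (∑ j, x j ^ 2)) := by
          apply Real.sqrt_le_sqrt
          exact Finset.sum_le_sum fun i _ => hCS i
      _ = Real.sqrt (frobSq A * ∑ j, x j ^ 2) := by rw [frobSq, ← Finset.sum_mul]
      _ = frob A * Real.sqrt (∑ j, x j ^ 2) := by
          rw [frob, Real.sqrt_mul]
          rw [frobSq]; positivity

lemma midProd_lt {m : ℕ} (W : ℕ → Matrix (Fin m) (Fin m) ℝ) {i j : ℕ} (h : j < i) :
    midProd W i j = 1 := by
  unfold midProd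
  have : j + 1 - i = 0 := by omega
  simp [this]

lemma midProd_split_left {m : ℕ} (W : ℕ → Matrix (Fin m) (Fin m) ℝ) {i j : ℕ} (h : i ≤ j) :
    midProd W i j = midProd W (i + 1) j * W i := by
  unfold midProd
  have h1 : j + 1 - i = (j + 1 - (i + 1)) + 1 := by omega
  rw [h1, List.range'_succ, List.reverse_cons, List.map_append, List.prod_append]
  simp

set_option maxHeartbeats 1000000 in
/-- perturbation bound for the top-layer partial products `W_{L:i}`. -/
theorem perturbation_top_products :
    ∀ K : ℝ, 1 ≤ K → ∃ C > (0 : ℝ),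
      ∀ (L m din dout : ℕ), 2 ≤ L → 1 ≤ m → 1 ≤ din → 1 ≤ dout → dout ≤ m →
      ∀ (W10 : Matrix (Fin m) (Fin din) ℝ) (Wmid0 : ℕ → Matrix (Fin m) (Fin m) ℝ)
        (WL0 : Matrix (Fin dout) (Fin m) ℝ),
      (∀ a b : ℕ, 1 < a → a ≤ b → b < L →
        smax (midProd Wmid0 a b) ≤ K * Real.sqrt L * (m : ℝ) ^ (((b : ℝ) - a + 1) / 2)) →
      (∀ a : ℕ, 1 < a → a ≤ L →
        smax (WL0 * midProd Wmid0 a (L - 1)) ≤ 1.2 * (m : ℝ) ^ (((L : ℝ) - a + 1) / 2)) →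
      ∀ R : ℝ, 0 < R →
      ∀ (Δ1 : Matrix (Fin m) (Fin din) ℝ) (Δmid : ℕ → Matrix (Fin m) (Fin m) ℝ)
        (ΔL : Matrix (Fin dout) (Fin m) ℝ),
      frob Δ1 ≤ R → (∀ k, 2 ≤ k → k ≤ L - 1 → frob (Δmid k) ≤ R) → frob ΔL ≤ R →
      (m : ℝ) ≥ C * L ^ 3 * R ^ 2 →
      ∀ i : ℕ, 1 < i → i ≤ L →
        smax ((WL0 + ΔL) * midProd (fun k => Wmid0 k + Δmid k) i (L - 1) -
            WL0 * midProd Wmid0 i (L - 1)) ≤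
          0.05 * (m : ℝ) ^ (((L : ℝ) - i + 1) / 2) := by
  intro K hK
  refine ⟨2025 * K ^ 2, by positivity, ?_⟩
  intro L m din dout hL hm hdin hdout hdm W10 Wmid0 WL0 h1 h2 R hR Δ1 Δmid ΔL hΔ1 hΔmid hΔL hmC
    i₀ hi₀1 hi₀L
  have hm0 : 0 < m := hm
  have hmR : (0:ℝ) < m := by exact_mod_cast hm0
  have hLR : (2:ℝ) ≤ L := by exact_mod_cast hL
  have hsL : (1:ℝ) ≤ Real.sqrt L := by
    rw [show (1:ℝ) = Real.sqrt 1 by simp]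
    exact Real.sqrt_le_sqrt (by linarith)
  set W' : ℕ → Matrix (Fin m) (Fin m) ℝ := fun k => Wmid0 k + Δmid k with hW'
  -- telescoping identity
  have key_id : ∀ n : ℕ, ∀ i : ℕ, 1 ≤ i → i ≤ L → L - i = n →
      (WL0 + ΔL) * midProd W' i (L - 1) =
        WL0 * midProd Wmid0 i (L - 1) + (ΔL * midProd Wmid0 i (L - 1) +
          ∑ j ∈ Finset.Ico i L,
            ((WL0 + ΔL) * midProd W' (j + 1) (L - 1)) * Δmid j * midProd Wmid0 i (j - 1)) := by
    intro n
    induction n with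
    | zero =>
      intro i hi1' hiL hn
      have hIL : L = i := by omega
      subst hIL
      rw [midProd_lt _ (by omega), midProd_lt _ (by omega), Finset.Ico_self, Finset.sum_empty]
      simp [Matrix.add_mul, Matrix.mul_one]
    | succ n ih =>
      intro i hi1' hiL hn
      have hilt : i < L := by omega
      have hi1L : i ≤ L - 1 := by omega
      have hs1 : midProd W' i (L-1) = midProd W' (i+1) (L-1) * W' i := midProd_split_left _ hi1L
      have hs2 : midProd Wmid0 i (L-1) = midProd Wmid0 (i+1) (L-1) * Wmid0 i :=
        midProd_split_left _ hi1L
      have hsum : ∀ j ∈ Finset.Ico (i+1) L,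
          ((WL0 + ΔL) * midProd W' (j + 1) (L - 1)) * Δmid j * midProd Wmid0 (i+1) (j - 1)
              * Wmid0 i
          = ((WL0 + ΔL) * midProd W' (j + 1) (L - 1)) * Δmid j * midProd Wmid0 i (j - 1) := by
        intro j hj
        rw [Finset.mem_Ico] at hj
        rw [midProd_split_left Wmid0 (show i ≤ j - 1 by omega)]
        exact Matrix.mul_assoc _ _ _
      calc (WL0 + ΔL) * midProd W' i (L - 1)
          = ((WL0 + ΔL) * midProd W' (i+1) (L - 1)) * Wmid0 i
            + ((WL0 + ΔL) * midProd W' (i+1) (L - 1)) * Δmid i := by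
            rw [hs1]
            show (WL0 + ΔL) * (midProd W' (i+1) (L-1) * (Wmid0 i + Δmid i)) = _
            rw [← Matrix.mul_assoc, Matrix.mul_add]
        _ = (WL0 * midProd Wmid0 (i+1) (L - 1) + (ΔL * midProd Wmid0 (i+1) (L - 1) +
              ∑ j ∈ Finset.Ico (i+1) L, ((WL0 + ΔL) * midProd W' (j + 1) (L - 1)) * Δmid j *
                midProd Wmid0 (i+1) (j - 1))) * Wmid0 i
            + ((WL0 + ΔL) * midProd W' (i+1) (L - 1)) * Δmid i := by
            rw [ih (i+1) (by omega) (by omega) (by omega)]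
        _ = _ := by
            rw [Finset.sum_eq_sum_Ico_succ_bot hilt, Matrix.add_mul, Matrix.add_mul,
              Matrix.sum_mul, Finset.sum_congr rfl hsum, hs2,
              midProd_lt Wmid0 (show i - 1 < i by omega), Matrix.mul_one,
              ← Matrix.mul_assoc WL0, ← Matrix.mul_assoc ΔL]
            abel
  have diff_eq : ∀ i : ℕ, 1 ≤ i → i ≤ L →
      (WL0 + ΔL) * midProd W' i (L - 1) - WL0 * midProd Wmid0 i (L - 1) =
        ΔL * midProd Wmid0 i (L - 1) +
          ∑ j ∈ Finset.Ico i L,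
            ((WL0 + ΔL) * midProd W' (j + 1) (L - 1)) * Δmid j * midProd Wmid0 i (j - 1) := by
    intro i hi1' hiL
    rw [key_id (L - i) i hi1' hiL rfl, add_sub_cancel_left]
  -- key numeric fact
  have hsqrt_main : 45 * K * L * Real.sqrt L * R ≤ Real.sqrt m := by
    rw [Real.le_sqrt (by positivity) (by positivity)]
    have hq : (45 * K * (L:ℝ) * Real.sqrt L * R)^2
        = 2025 * K^2 * ((L:ℝ)^2 * (Real.sqrt L)^2) * R^2 := by ring
    rw [hq, Real.sq_sqrt (by positivity : (0:ℝ) ≤ (L:ℝ))]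
    calc 2025 * K^2 * ((L:ℝ)^2 * L) * R^2 = 2025 * K^2 * (L:ℝ)^3 * R^2 := by ring
      _ ≤ (m:ℝ) := hmC
  have hΔL' : smax ΔL ≤ R := le_trans (smax_le_frob hm0 ΔL) hΔL
  -- main downward induction
  have main : ∀ n : ℕ, ∀ i : ℕ, 1 < i → i ≤ L → L - i ≤ n →
      smax ((WL0 + ΔL) * midProd W' i (L - 1) - WL0 * midProd Wmid0 i (L - 1)) ≤
        0.05 * (m:ℝ) ^ (((L:ℝ) - i + 1)/2) := by
    intro n
    induction n with
    | zero =>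
      intro i hi1 hiL hn
      have hIL : L = i := by omega
      subst hIL
      rw [midProd_lt _ (by omega), midProd_lt _ (by omega)]
      have hd : (WL0 + ΔL) * (1 : Matrix (Fin m) (Fin m) ℝ)
          - WL0 * (1 : Matrix (Fin m) (Fin m) ℝ) = ΔL := by simp
      rw [hd]
      have hexp : (((L:ℝ) - L + 1)/2) = (1/2 : ℝ) := by ring
      rw [hexp, ← Real.sqrt_eq_rpow]
      have h45 : 45 * R ≤ Real.sqrt m := by
        have eA : (1:ℝ) ≤ K * L := by nlinarith [mul_nonneg (sub_nonneg.2 hK) (by linarith : (0:ℝ) ≤ (L:ℝ) - 1)]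
        have e2 : (1:ℝ) ≤ K * L * Real.sqrt L := by
          nlinarith [mul_nonneg (sub_nonneg.2 eA) (sub_nonneg.2 hsL)]
        have e4 : (0:ℝ) ≤ (K * L * Real.sqrt L - 1) * R := mul_nonneg (by linarith) hR.le
        nlinarith [hsqrt_main]
      calc smax ΔL ≤ R := hΔL'
        _ ≤ 0.05 * Real.sqrt m := by linarith [Real.sqrt_nonneg (m:ℝ)]
    | succ n ih =>
      intro i hi1 hiL hn
      by_cases hcase : L - i ≤ n
      · exact ih i hi1 hiL hcase
      · have hni : L - i = n + 1 := by omega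
        have hilt : i < L := by omega
        rw [diff_eq i (by omega) hiL]
        set P : ℝ := (m:ℝ) ^ (((L:ℝ) - i)/2) with hP
        have hPpos : (0:ℝ) < P := Real.rpow_pos_of_pos hmR _
        -- first term
        have hPiL : smax (midProd Wmid0 i (L-1)) ≤ K * Real.sqrt L * P := by
          have h := h1 i (L-1) hi1 (by omega) (by omega)
          have hexp : ((↑(L-1):ℝ) - i + 1)/2 = ((L:ℝ) - i)/2 := by
            rw [Nat.cast_sub (by omega : 1 ≤ L)]; push_cast; ring
          rw [hexp] at h
          exact h
        have t1 : smax (ΔL * midProd Wmid0 i (L-1)) ≤ R * (K * Real.sqrt L * P) := by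
          calc smax (ΔL * midProd Wmid0 i (L-1))
              ≤ smax ΔL * smax (midProd Wmid0 i (L-1)) := smax_mul_le hm0 hm0 _ _
            _ ≤ R * (K * Real.sqrt L * P) := by
                apply mul_le_mul hΔL' hPiL (smax_nonneg hm0 _) hR.le
        -- terms in the sum
        have t2 : ∀ j ∈ Finset.Ico i L,
            smax (((WL0 + ΔL) * midProd W' (j + 1) (L - 1)) * Δmid j * midProd Wmid0 i (j - 1))
              ≤ 1.25 * (R * (K * Real.sqrt L * P)) := by
          intro j hj
          rw [Finset.mem_Ico] at hj
          have hBj : smax ((WL0 + ΔL) * midProd W' (j+1) (L-1))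
              ≤ 1.25 * (m:ℝ) ^ (((L:ℝ) - j)/2) := by
            have hd : (WL0 + ΔL) * midProd W' (j+1) (L-1) =
                ((WL0 + ΔL) * midProd W' (j+1) (L-1) - WL0 * midProd Wmid0 (j+1) (L-1)) +
                  WL0 * midProd Wmid0 (j+1) (L-1) := by abel
            rw [hd]
            have hihj := ih (j+1) (by omega) (by omega) (by omega)
            have hh2 := h2 (j+1) (by omega) (by omega)
            have hexp : ((L:ℝ) - ↑(j+1) + 1)/2 = ((L:ℝ) - j)/2 := by push_cast; ring
            rw [hexp] at hihj hh2
            calc smax _ ≤ smax ((WL0 + ΔL) * midProd W' (j+1) (L-1) -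
                    WL0 * midProd Wmid0 (j+1) (L-1)) + smax (WL0 * midProd Wmid0 (j+1) (L-1)) :=
                  smax_add_le hm0 _ _
              _ ≤ 0.05 * (m:ℝ) ^ (((L:ℝ) - j)/2) + 1.2 * (m:ℝ) ^ (((L:ℝ) - j)/2) :=
                  add_le_add hihj hh2
              _ = 1.25 * (m:ℝ) ^ (((L:ℝ) - j)/2) := by ring
          have hPj : smax (midProd Wmid0 i (j-1)) ≤
              K * Real.sqrt L * (m:ℝ) ^ (((j:ℝ) - i)/2) := by
            rcases eq_or_lt_of_le hj.1 with rfl | hlt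
            · rw [midProd_lt _ (by omega)]
              have hz : (((i:ℝ) - i)/2) = (0:ℝ) := by ring
              rw [hz, Real.rpow_zero, mul_one]
              calc smax (1 : Matrix (Fin m) (Fin m) ℝ) ≤ 1 := smax_one' hm0
                _ ≤ K * Real.sqrt L := by nlinarith
            · have h := h1 i (j-1) hi1 (by omega) (by omega)
              have hexp : ((↑(j-1):ℝ) - i + 1)/2 = ((j:ℝ) - i)/2 := by
                rw [Nat.cast_sub (by omega : 1 ≤ j)]; push_cast; ring
              rw [hexp] at h
              exact h
          have hΔj : smax (Δmid j) ≤ R :=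
            le_trans (smax_le_frob hm0 _) (hΔmid j (by omega) (by omega))
          have hcomb : smax (((WL0 + ΔL) * midProd W' (j + 1) (L - 1)) * Δmid j *
                midProd Wmid0 i (j - 1))
              ≤ (1.25 * (m:ℝ) ^ (((L:ℝ) - j)/2) * R) *
                  (K * Real.sqrt L * (m:ℝ) ^ (((j:ℝ) - i)/2)) := by
            calc smax (((WL0 + ΔL) * midProd W' (j + 1) (L - 1)) * Δmid j *
                  midProd Wmid0 i (j - 1))
                ≤ smax (((WL0 + ΔL) * midProd W' (j + 1) (L - 1)) * Δmid j) *
                    smax (midProd Wmid0 i (j - 1)) := smax_mul_le hm0 hm0 _ _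
              _ ≤ (1.25 * (m:ℝ) ^ (((L:ℝ) - j)/2) * R) *
                    (K * Real.sqrt L * (m:ℝ) ^ (((j:ℝ) - i)/2)) := by
                  apply mul_le_mul _ hPj (smax_nonneg hm0 _) (by positivity)
                  exact le_trans (smax_mul_le hm0 hm0 _ _)
                    (mul_le_mul hBj hΔj (smax_nonneg hm0 _) (by positivity))
          have hrpow : (m:ℝ) ^ (((L:ℝ) - j)/2) * (m:ℝ) ^ (((j:ℝ) - i)/2) = P := by
            rw [hP, ← Real.rpow_add hmR]
            congr 1
            ring
          calc smax (((WL0 + ΔL) * midProd W' (j + 1) (L - 1)) * Δmid j *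
                midProd Wmid0 i (j - 1))
              ≤ (1.25 * (m:ℝ) ^ (((L:ℝ) - j)/2) * R) *
                  (K * Real.sqrt L * (m:ℝ) ^ (((j:ℝ) - i)/2)) := hcomb
            _ = 1.25 * (R * (K * Real.sqrt L *
                  ((m:ℝ) ^ (((L:ℝ) - j)/2) * (m:ℝ) ^ (((j:ℝ) - i)/2)))) := by ring
            _ = 1.25 * (R * (K * Real.sqrt L * P)) := by rw [hrpow]
        -- combine
        have hsum_bound : smax (ΔL * midProd Wmid0 i (L-1) +
            ∑ j ∈ Finset.Ico i L,
              ((WL0 + ΔL) * midProd W' (j + 1) (L - 1)) * Δmid j * midProd Wmid0 i (j - 1))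
            ≤ R * (K * Real.sqrt L * P) + (↑(L - i) : ℝ) * (1.25 * (R * (K * Real.sqrt L * P))) := by
          calc smax _ ≤ smax (ΔL * midProd Wmid0 i (L-1)) +
                smax (∑ j ∈ Finset.Ico i L,
                  ((WL0 + ΔL) * midProd W' (j + 1) (L - 1)) * Δmid j * midProd Wmid0 i (j - 1)) :=
              smax_add_le hm0 _ _
            _ ≤ smax (ΔL * midProd Wmid0 i (L-1)) +
                ∑ j ∈ Finset.Ico i L, smax (((WL0 + ΔL) * midProd W' (j + 1) (L - 1)) * Δmid j *
                  midProd Wmid0 i (j - 1)) :=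
              add_le_add le_rfl (smax_sum_le hm0 _ _)
            _ ≤ R * (K * Real.sqrt L * P) +
                ∑ _j ∈ Finset.Ico i L, 1.25 * (R * (K * Real.sqrt L * P)) :=
              add_le_add t1 (Finset.sum_le_sum t2)
            _ = R * (K * Real.sqrt L * P) +
                (↑(L - i) : ℝ) * (1.25 * (R * (K * Real.sqrt L * P))) := by
              rw [Finset.sum_const, Nat.card_Ico, nsmul_eq_mul]
        refine le_trans hsum_bound ?_
        -- final arithmetic
        have hcast : (↑(L - i) : ℝ) = (L:ℝ) - i := by
          rw [Nat.cast_sub hiL]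
        have hiR : (2:ℝ) ≤ (i:ℝ) := by
          have : 2 ≤ i := hi1
          exact_mod_cast this
        have hLiR : (i:ℝ) ≤ (L:ℝ) := by exact_mod_cast hiL
        have hscalar : R * (K * Real.sqrt L) + ((L:ℝ) - i) * (1.25 * (R * (K * Real.sqrt L)))
            ≤ 0.05 * Real.sqrt m := by
          have hfac : R * (K * Real.sqrt L) + ((L:ℝ) - i) * (1.25 * (R * (K * Real.sqrt L)))
              = R * K * Real.sqrt L * (1 + 1.25 * ((L:ℝ) - i)) := by ring
          rw [hfac]
          have hcoef : 1 + 1.25 * ((L:ℝ) - i) ≤ 1.25 * L := by nlinarith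
          have hRKL : (0:ℝ) ≤ R * K * Real.sqrt L := by positivity
          calc R * K * Real.sqrt L * (1 + 1.25 * ((L:ℝ) - i))
              ≤ R * K * Real.sqrt L * (1.25 * L) := by
                exact mul_le_mul_of_nonneg_left hcoef hRKL
            _ = (1.25/45) * (45 * K * L * Real.sqrt L * R) := by ring
            _ ≤ (1.25/45) * Real.sqrt m := by
                apply mul_le_mul_of_nonneg_left hsqrt_main (by norm_num)
            _ ≤ 0.05 * Real.sqrt m := by nlinarith [Real.sqrt_nonneg (m:ℝ)]
        have hsplit : (m:ℝ) ^ (((L:ℝ) - i + 1)/2) = Real.sqrt m * P := by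
          rw [hP, Real.sqrt_eq_rpow, ← Real.rpow_add hmR]
          congr 1
          ring
        rw [hsplit, hcast]
        calc R * (K * Real.sqrt L * P) + ((L:ℝ) - i) * (1.25 * (R * (K * Real.sqrt L * P)))
            = (R * (K * Real.sqrt L) + ((L:ℝ) - i) * (1.25 * (R * (K * Real.sqrt L)))) * P := by
              ring
          _ ≤ (0.05 * Real.sqrt m) * P := mul_le_mul_of_nonneg_right hscalar hPpos.le
          _ = 0.05 * (Real.sqrt m * P) := by ring
  exact main (L - i₀) i₀ hi₀1 hi₀L le_rfl
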